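/- Let ξ be a primitive 8th root of unity and τ ∈ PGL(8,ℂ) be induced by diag(1, ξ, ξ², ..., ξ⁷), and let σ₂, σ₃ ∈ PGL(8,ℂ) be the coordinate permutations (1357)(2468) and (1256)(4387). Then the subgroup generated by σ₂ and σ₃ is isomorphic to the quaternion group Q8, and the group generated by τ, σ₂, σ₃ is a nonabelian group of order 64 isomorphic to a semidirect product of the normal subgroup ℤ/8 generated by τ with Q8. -/

import Mathlib

/-- `ℂ⁸` with coordinates `x₁, …, x₈` indexed by `Fin 8` (so `xᵢ` is coordinate `i-1`). -/
abbrev V8 := Fin 8 → ℂ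

/-- `GL(8, ℂ)`, realized as the group of `ℂ`-linear automorphisms of `ℂ⁸`. -/
abbrev GL8 := V8 ≃ₗ[ℂ] V8

/-- The monomial transformation `(x_i) ↦ (c_i · x_{e i})`. -/
noncomputable def monomial (c : Fin 8 → ℂˣ) (e : Equiv.Perm (Fin 8)) : GL8 :=
  (LinearEquiv.funCongrLeft ℂ ℂ e).trans
    (LinearEquiv.piCongrRight fun i => LinearEquiv.smulOfUnit (c i))

/-- `PGL(8, ℂ) = GL(8, ℂ)/center`. -/
abbrev PGL8 := GL8 ⧸ Subgroup.center GL8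

/-- The coordinate permutation `(1357)(2468)` (in `1`-based indexing). -/
def perm2 : Equiv.Perm (Fin 8) := [(0 : Fin 8), 2, 4, 6].formPerm * [(1 : Fin 8), 3, 5, 7].formPerm

/-- The coordinate permutation `(1256)(4387)` (in `1`-based indexing). -/
def perm3 : Equiv.Perm (Fin 8) := [(0 : Fin 8), 1, 4, 5].formPerm * [(3 : Fin 8), 2, 7, 6].formPerm

/-! ### Auxiliary lemmas on `monomial` -/

lemma monomial_apply (c : Fin 8 → ℂˣ) (e : Equiv.Perm (Fin 8)) (x : V8) (i : Fin 8) :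
    monomial c e x i = (c i : ℂ) * x (e i) := by
  simp [monomial, LinearEquiv.funCongrLeft, LinearEquiv.smulOfUnit, Units.smul_def,
    LinearEquiv.piCongrRight]

lemma monomial_mul (c c' : Fin 8 → ℂˣ) (e e' : Equiv.Perm (Fin 8)) :
    monomial c e * monomial c' e' = monomial (fun i => c i * c' (e i)) (e' * e) := by
  apply LinearEquiv.toLinearMap_injective
  apply LinearMap.ext; intro x
  funext i
  show monomial c e (monomial c' e' x) i = _
  simp [monomial_apply, mul_assoc]

lemma monomial_one : monomial 1 1 = 1 := by
  apply LinearEquiv.toLinearMap_injective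
  apply LinearMap.ext; intro x
  funext i
  show monomial 1 1 x i = x i
  simp [monomial_apply]

lemma const_mem_center (u : ℂˣ) : monomial (fun _ => u) 1 ∈ Subgroup.center GL8 := by
  rw [Subgroup.mem_center_iff]
  intro g
  apply LinearEquiv.toLinearMap_injective
  apply LinearMap.ext; intro x
  funext i
  show g (monomial (fun _ => u) 1 x) i = monomial (fun _ => u) 1 (g x) i
  have hx : monomial (fun _ => u) 1 x = (u : ℂ) • x := by
    funext j; simp [monomial_apply, Units.smul_def]
  rw [hx, map_smul, monomial_apply]
  simp [Units.smul_def]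

lemma monomial_inj_aux {c c' : Fin 8 → ℂˣ} {e e' : Equiv.Perm (Fin 8)}
    (h : monomial c e = monomial c' e') : c = c' := by
  funext i
  have := congrArg (fun (g : GL8) => g (fun _ => (1:ℂ)) i) h
  simp [monomial_apply] at this
  exact Units.ext this

/-- if `monomial c e` is central then `e = 1` and `c` is constant -/
lemma center_monomial {c : Fin 8 → ℂˣ} {e : Equiv.Perm (Fin 8)}
    (h : monomial c e ∈ Subgroup.center GL8) : e = 1 ∧ ∀ i, c i = c 0 := by
  rw [Subgroup.mem_center_iff] at h
  have he : e = 1 := by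
    have hD := h (monomial (fun i => Units.mk0 ((i:ℕ)+1 : ℂ)
      (Nat.cast_add_one_ne_zero (i:ℕ))) 1)
    rw [monomial_mul, monomial_mul, mul_one, one_mul] at hD
    have hco := monomial_inj_aux hD
    apply Equiv.ext
    intro i
    have hi := congrFun hco i
    have hi' : (((i:ℕ):ℂ)+1) * (c i : ℂ) = (c i : ℂ) * (((e i:ℕ):ℂ)+1) := by
      have := congrArg (fun u : ℂˣ => (u : ℂ)) hi
      simpa using this
    rw [mul_comm ((((i:ℕ):ℂ))+1) _] at hi'
    have hc0 : (c i : ℂ) ≠ 0 := Units.ne_zero _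
    have : (((i:ℕ):ℂ)+1) = (((e i:ℕ):ℂ)+1) := mul_left_cancel₀ hc0 hi'
    have : ((i:ℕ):ℂ) = ((e i:ℕ):ℂ) := by linear_combination this
    exact (Fin.ext (by exact_mod_cast this)).symm
  subst he
  refine ⟨rfl, fun i => ?_⟩
  have hswap := h (monomial 1 (Equiv.swap 0 i))
  rw [monomial_mul, monomial_mul] at hswap
  have hco := monomial_inj_aux hswap
  have h0 := congrFun hco 0
  simpa [Equiv.swap_apply_left] using h0

/-! ### Basic homomorphisms into `GL8` and `PGL8` -/

noncomputable def permHom : Equiv.Perm (Fin 8) →* GL8 where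
  toFun e := monomial 1 e⁻¹
  map_one' := by simpa using monomial_one
  map_mul' e e' := by
    show monomial 1 (e * e')⁻¹ = monomial 1 e⁻¹ * monomial 1 e'⁻¹
    rw [monomial_mul, mul_inv_rev]
    congr 1
    funext i; simp

noncomputable def diagHom : (Fin 8 → ℂˣ) →* GL8 where
  toFun c := monomial c 1
  map_one' := monomial_one
  map_mul' c c' := by
    rw [monomial_mul, mul_one]
    rfl

noncomputable def mkPGL : GL8 →* PGL8 := QuotientGroup.mk' (Subgroup.center GL8)

lemma mkPGL_apply (g : GL8) : mkPGL g = QuotientGroup.mk g := rfl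

/-- scalars can be dropped in `PGL8` -/
lemma mk_scalar_mul (u : ℂˣ) (c : Fin 8 → ℂˣ) (e : Equiv.Perm (Fin 8)) :
    mkPGL (monomial (fun i => u * c i) e) = mkPGL (monomial c e) := by
  have : monomial (fun i => u * c i) e = monomial (fun _ => u) 1 * monomial c e := by
    rw [monomial_mul, mul_one]
    rfl
  rw [this, map_mul]
  have : mkPGL (monomial (fun _ => u) 1) = 1 :=
    (QuotientGroup.eq_one_iff _).mpr (const_mem_center u)
  rw [this, one_mul]

/-! ### The quaternion subgroup -/

open QuaternionGroup in
def qf : QuaternionGroup 2 → Equiv.Perm (Fin 8)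
  | .a k => perm2⁻¹ ^ k.val
  | .xa k => perm3⁻¹ * perm2⁻¹ ^ k.val

lemma qf_mul : ∀ x y, qf (x * y) = qf x * qf y := by decide
lemma qf_one_of : ∀ x, qf x = 1 → x = 1 := by decide

def qfHom : QuaternionGroup 2 →* Equiv.Perm (Fin 8) := MonoidHom.mk' qf qf_mul

noncomputable def L2 : QuaternionGroup 2 →* PGL8 := mkPGL.comp (permHom.comp qfHom)

lemma L2_injective : Function.Injective L2 := by
  rw [← MonoidHom.ker_eq_bot_iff]
  rw [eq_bot_iff]
  intro q hq
  have h1 : mkPGL (monomial 1 (qf q)⁻¹) = 1 := hq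
  have h2 : monomial 1 (qf q)⁻¹ ∈ Subgroup.center GL8 := (QuotientGroup.eq_one_iff _).mp h1
  have h3 := (center_monomial h2).1
  have : qf q = 1 := by rw [← inv_inv (qf q), h3, inv_one]
  simpa using qf_one_of q this

open QuaternionGroup in
lemma Q8gen : Subgroup.closure ({a 1, xa 0} : Set (QuaternionGroup 2)) = ⊤ := by
  rw [eq_top_iff]
  intro q _
  have ha : (a 1 : QuaternionGroup 2) ∈ Subgroup.closure ({a 1, xa 0} : Set (QuaternionGroup 2)) :=
    Subgroup.subset_closure (by simp)
  have hx : (xa 0 : QuaternionGroup 2) ∈ Subgroup.closure ({a 1, xa 0} : Set (QuaternionGroup 2)) :=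
    Subgroup.subset_closure (by simp)
  cases q with
  | a k =>
      have : (a 1 : QuaternionGroup 2) ^ (k.val) = a k := by
        rw [a_one_pow]; congr 1; simp [ZMod.natCast_val, ZMod.cast_id]
      exact this ▸ pow_mem ha k.val
  | xa k =>
      have hk : (a 1 : QuaternionGroup 2) ^ (k.val) = a k := by
        rw [a_one_pow]; congr 1; simp [ZMod.natCast_val, ZMod.cast_id]
      have : (xa 0 : QuaternionGroup 2) * a k = xa k := by
        show xa (0 + k) = xa k
        rw [zero_add]
      exact this ▸ mul_mem hx (hk ▸ pow_mem ha k.val)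

lemma L2_a1 : L2 (QuaternionGroup.a 1) = QuotientGroup.mk (monomial 1 perm2) := by
  show mkPGL (monomial 1 (qf (QuaternionGroup.a 1))⁻¹) = _
  have : qf (QuaternionGroup.a 1) = perm2⁻¹ := by
    decide
  rw [this, inv_inv]
  rfl

lemma L2_xa0 : L2 (QuaternionGroup.xa 0) = QuotientGroup.mk (monomial 1 perm3) := by
  show mkPGL (monomial 1 (qf (QuaternionGroup.xa 0))⁻¹) = _
  have : qf (QuaternionGroup.xa 0) = perm3⁻¹ := by
    decide
  rw [this, inv_inv]
  rfl

lemma L2_range : L2.range =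
    Subgroup.closure {QuotientGroup.mk (monomial 1 perm2), QuotientGroup.mk (monomial 1 perm3)} := by
  rw [MonoidHom.range_eq_map, ← Q8gen, MonoidHom.map_closure]
  congr 1
  rw [Set.image_insert_eq, Set.image_singleton, L2_a1, L2_xa0]

/-! ### Permutation arithmetic -/

lemma perm2_val : ∀ i : Fin 8, ((perm2 i : Fin 8) : ℕ) = (2 + (i:ℕ)) % 8 := by decide
lemma perm3_val : ∀ i : Fin 8, ((perm3 i : Fin 8) : ℕ) = (1 + (i:ℕ)*3) % 8 := by decide

section xi

variable (ξ : ℂˣ)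

lemma xipow_mod (hξ8 : ξ^8 = 1) (n : ℕ) : ξ^(n % 8) = ξ^n := by
  conv_rhs => rw [← Nat.div_add_mod n 8]
  rw [pow_add, pow_mul, hξ8, one_pow, one_mul]

noncomputable def τdiag : GL8 := monomial (fun i => ξ ^ (i:ℕ)) 1

lemma τdiag_pow (k : ℕ) : (τdiag ξ)^k = monomial (fun i => ξ ^ ((i:ℕ)*k)) 1 := by
  induction k with
  | zero => simp only [pow_zero, mul_zero]; exact monomial_one.symm
  | succ k ih =>
      rw [pow_succ, ih, τdiag, monomial_mul, mul_one]
      congr 1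
      funext i
      show ξ ^ ((i:ℕ)*k) * ξ ^ ((1 : Equiv.Perm (Fin 8)) i : ℕ) = ξ ^ ((i:ℕ)*(k+1))
      rw [show ((1 : Equiv.Perm (Fin 8)) i) = i from rfl, ← pow_add]
      ring_nf

lemma S2T (hξ8 : ξ^8 = 1) :
    mkPGL (monomial 1 perm2) * mkPGL (τdiag ξ) = mkPGL (τdiag ξ) * mkPGL (monomial 1 perm2) := by
  rw [← map_mul, ← map_mul, τdiag, monomial_mul, monomial_mul, one_mul, mul_one]
  have h1 : (fun i => (1 : Fin 8 → ℂˣ) i * ξ ^ ((perm2 i : Fin 8) : ℕ))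
      = fun i : Fin 8 => ξ^2 * ξ^(i:ℕ) := by
    funext i
    rw [Pi.one_apply, one_mul, perm2_val i, xipow_mod ξ hξ8, pow_add]
  have h2 : (fun i : Fin 8 => ξ ^ (i:ℕ) * (1 : Fin 8 → ℂˣ) ((1 : Equiv.Perm (Fin 8)) i))
      = fun i : Fin 8 => ξ^(i:ℕ) := by
    funext i; simp
  rw [h1, h2, mk_scalar_mul]

lemma S3T (hξ8 : ξ^8 = 1) :
    mkPGL (monomial 1 perm3) * mkPGL (τdiag ξ) =
      (mkPGL (τdiag ξ))^3 * mkPGL (monomial 1 perm3) := by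
  rw [← map_mul, ← map_pow, ← map_mul, τdiag_pow, τdiag, monomial_mul, monomial_mul,
    one_mul, mul_one]
  have h1 : (fun i => (1 : Fin 8 → ℂˣ) i * ξ ^ ((perm3 i : Fin 8) : ℕ))
      = fun i : Fin 8 => ξ * ξ^((i:ℕ)*3) := by
    funext i
    rw [Pi.one_apply, one_mul, perm3_val i, xipow_mod ξ hξ8, pow_add, pow_one]
  have h2 : (fun i : Fin 8 => ξ ^ ((i:ℕ)*3) * (1 : Fin 8 → ℂˣ) ((1 : Equiv.Perm (Fin 8)) i))
      = fun i : Fin 8 => ξ^((i:ℕ)*3) := by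
    funext i; simp
  rw [h1, h2]
  exact mk_scalar_mul ξ _ _

lemma Tord (hξ8 : ξ^8 = 1) : (mkPGL (τdiag ξ))^8 = 1 := by
  rw [← map_pow, τdiag_pow]
  have : (fun i : Fin 8 => ξ ^ ((i:ℕ)*8)) = (1 : Fin 8 → ℂˣ) := by
    funext i
    rw [Pi.one_apply, mul_comm, pow_mul, hξ8, one_pow]
  rw [this, monomial_one, map_one]

lemma Tmod (hξ8 : ξ^8 = 1) (n : ℕ) : (mkPGL (τdiag ξ))^(n % 8) = (mkPGL (τdiag ξ))^n := by
  conv_rhs => rw [← Nat.div_add_mod n 8]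
  rw [pow_add, pow_mul, Tord ξ hξ8, one_pow, one_mul]

end xi

/-! ### The action of `Q₈` on `ℤ/8` -/

def unit3 : (ZMod 8)ˣ := ⟨3, 3, by decide, by decide⟩

open QuaternionGroup in
def uq : QuaternionGroup 2 → (ZMod 8)ˣ
  | .a _ => 1
  | .xa _ => unit3

lemma uq_mul : ∀ x y, uq (x * y) = uq x * uq y := by decide

def uHom : QuaternionGroup 2 →* (ZMod 8)ˣ := MonoidHom.mk' uq uq_mul

def addAutMulAut : Multiplicative (AddAut (ZMod 8)) →* MulAut (Multiplicative (ZMod 8)) where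
  toFun f := AddEquiv.toMultiplicative (Multiplicative.toAdd f)
  map_one' := rfl
  map_mul' _ _ := rfl

def φ8 : QuaternionGroup 2 →* MulAut (Multiplicative (ZMod 8)) :=
  addAutMulAut.comp ((DistribMulAction.toAddAut (ZMod 8)ˣ (ZMod 8)).comp uHom)

lemma φ8_apply (q : QuaternionGroup 2) (x : Multiplicative (ZMod 8)) :
    φ8 q x = Multiplicative.ofAdd ((uq q : ZMod 8) * Multiplicative.toAdd x) := rfl

section xi2

variable (ξ : ℂˣ)

noncomputable def f1 (hξ8 : ξ^8 = 1) : Multiplicative (ZMod 8) →* PGL8 :=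
  MonoidHom.mk' (fun x => (mkPGL (τdiag ξ))^(Multiplicative.toAdd x).val)
    (by
      intro a b
      show (mkPGL (τdiag ξ))^(Multiplicative.toAdd (a*b)).val = _
      rw [← pow_add]
      have : (Multiplicative.toAdd (a*b)).val
          = ((Multiplicative.toAdd a).val + (Multiplicative.toAdd b).val) % 8 :=
        ZMod.val_add _ _
      rw [this, Tmod ξ hξ8])

lemma L2_apply (q : QuaternionGroup 2) : L2 q = mkPGL (permHom (qf q)) := rfl

lemma permHom_inv (e : Equiv.Perm (Fin 8)) : permHom e⁻¹ = monomial 1 e := by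
  show monomial 1 e⁻¹⁻¹ = _
  rw [inv_inv]

lemma L2_a (k : ZMod 4) :
    L2 (QuaternionGroup.a k) = (mkPGL (monomial 1 perm2))^k.val := by
  rw [L2_apply, show qf (QuaternionGroup.a k) = perm2⁻¹ ^ k.val from rfl,
    map_pow, permHom_inv, map_pow]

lemma L2_xa (k : ZMod 4) :
    L2 (QuaternionGroup.xa k) = mkPGL (monomial 1 perm3) * (mkPGL (monomial 1 perm2))^k.val := by
  rw [L2_apply, show qf (QuaternionGroup.xa k) = perm3⁻¹ * perm2⁻¹ ^ k.val from rfl,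
    map_mul, map_pow, permHom_inv, permHom_inv, map_mul, map_pow]

lemma S2powT (hξ8 : ξ^8 = 1) (m : ℕ) :
    (mkPGL (monomial 1 perm2))^m * mkPGL (τdiag ξ)
      = mkPGL (τdiag ξ) * (mkPGL (monomial 1 perm2))^m := by
  induction m with
  | zero => simp
  | succ m ih =>
      rw [pow_succ, mul_assoc, S2T ξ hξ8, ← mul_assoc, ih, mul_assoc]

lemma conjT (hξ8 : ξ^8 = 1) (q : QuaternionGroup 2) :
    L2 q * mkPGL (τdiag ξ) = (mkPGL (τdiag ξ))^(((uq q : ZMod 8)).val) * L2 q := by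
  cases q with
  | a k =>
      rw [L2_a]
      have : ((((uq (QuaternionGroup.a k) : (ZMod 8)ˣ)) : ZMod 8)).val = 1 := rfl
      rw [this, pow_one]
      exact S2powT ξ hξ8 k.val
  | xa k =>
      rw [L2_xa]
      have h3 : ((((uq (QuaternionGroup.xa k) : (ZMod 8)ˣ)) : ZMod 8)).val = 3 := rfl
      rw [h3, mul_assoc, S2powT ξ hξ8, ← mul_assoc, S3T ξ hξ8, mul_assoc]

lemma conjTpow (hξ8 : ξ^8 = 1) (q : QuaternionGroup 2) (m : ℕ) :
    L2 q * (mkPGL (τdiag ξ))^m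
      = (mkPGL (τdiag ξ))^(((uq q : ZMod 8)).val * m) * L2 q := by
  induction m with
  | zero => simp
  | succ m ih =>
      rw [pow_succ, ← mul_assoc, ih, mul_assoc, conjT ξ hξ8, ← mul_assoc, ← pow_add,
        Nat.mul_succ]

lemma compat (hξ8 : ξ^8 = 1) :
    ∀ g, (f1 ξ hξ8).comp (φ8 g).toMonoidHom
      = (MulAut.conj (L2 g)).toMonoidHom.comp (f1 ξ hξ8) := by
  intro g
  ext x
  show (mkPGL (τdiag ξ))^(Multiplicative.toAdd (φ8 g x)).val
      = L2 g * (mkPGL (τdiag ξ))^(Multiplicative.toAdd x).val * (L2 g)⁻¹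
  rw [conjTpow ξ hξ8, mul_assoc, mul_inv_cancel, mul_one]
  have : (Multiplicative.toAdd (φ8 g x)).val
      = (((uq g : ZMod 8)).val * (Multiplicative.toAdd x).val) % 8 := by
    exact (congrArg (fun y => (Multiplicative.toAdd y).val) (φ8_apply g x)).trans (ZMod.val_mul _ _)
  rw [this, Tmod ξ hξ8]

noncomputable def Lfull (hξ8 : ξ^8 = 1) :
    (Multiplicative (ZMod 8) ⋊[φ8] QuaternionGroup 2) →* PGL8 :=
  SemidirectProduct.lift (f1 ξ hξ8) L2 (compat ξ hξ8)

end xi2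

section main

open SemidirectProduct QuaternionGroup

variable (ξ : ℂˣ)

lemma Ggen :
    Subgroup.closure ({inl (Multiplicative.ofAdd (1 : ZMod 8)), inr (a 1), inr (xa 0)} :
      Set (Multiplicative (ZMod 8) ⋊[φ8] QuaternionGroup 2)) = ⊤ := by
  rw [eq_top_iff]
  intro g _
  set S : Set (Multiplicative (ZMod 8) ⋊[φ8] QuaternionGroup 2) :=
    {inl (Multiplicative.ofAdd (1 : ZMod 8)), inr (a 1), inr (xa 0)}
  rw [← inl_left_mul_inr_right g]
  refine mul_mem ?_ ?_
  · have h1 : inl (Multiplicative.ofAdd (1 : ZMod 8)) ∈ Subgroup.closure S :=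
      Subgroup.subset_closure (by simp [S])
    have : (inl (Multiplicative.ofAdd (1 : ZMod 8)) :
        Multiplicative (ZMod 8) ⋊[φ8] QuaternionGroup 2) ^ (Multiplicative.toAdd g.left).val
        = inl g.left := by
      rw [← map_pow]
      congr 1
      rw [← ofAdd_nsmul]
      have : ((Multiplicative.toAdd g.left).val : ℕ) • (1 : ZMod 8) = Multiplicative.toAdd g.left := by
        rw [nsmul_eq_mul, mul_one]
        simp [ZMod.natCast_val, ZMod.cast_id]
      rw [this, ofAdd_toAdd]
    exact this ▸ pow_mem h1 _
  · have h2 : g.right ∈ Subgroup.closure ({a 1, xa 0} : Set (QuaternionGroup 2)) := by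
      rw [Q8gen]; trivial
    have h3 : inr g.right ∈ Subgroup.map
        (inr : QuaternionGroup 2 →* Multiplicative (ZMod 8) ⋊[φ8] QuaternionGroup 2)
        (Subgroup.closure ({a 1, xa 0} : Set (QuaternionGroup 2))) :=
      Subgroup.mem_map_of_mem _ h2
    rw [MonoidHom.map_closure] at h3
    refine Subgroup.closure_mono ?_ h3
    intro x hx
    rcases hx with ⟨y, hy, rfl⟩
    rcases hy with rfl | rfl
    · exact Or.inr (Or.inl rfl)
    · exact Or.inr (Or.inr rfl)

lemma Lfull_inl1 (hξ8 : ξ^8 = 1) :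
    Lfull ξ hξ8 (inl (Multiplicative.ofAdd (1 : ZMod 8))) = mkPGL (τdiag ξ) := by
  rw [show Lfull ξ hξ8 (inl (Multiplicative.ofAdd (1 : ZMod 8)))
    = f1 ξ hξ8 (Multiplicative.ofAdd (1 : ZMod 8)) from SemidirectProduct.lift_inl _ _ _ _]
  show (mkPGL (τdiag ξ))^(ZMod.val (1 : ZMod 8)) = mkPGL (τdiag ξ)
  rw [show ZMod.val (1 : ZMod 8) = 1 from rfl, pow_one]

lemma Lfull_range (hξ8 : ξ^8 = 1) :
    (Lfull ξ hξ8).range = Subgroup.closure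
      {mkPGL (τdiag ξ), mkPGL (monomial 1 perm2), mkPGL (monomial 1 perm3)} := by
  rw [MonoidHom.range_eq_map, ← Ggen, MonoidHom.map_closure]
  congr 1
  rw [Set.image_insert_eq, Set.image_insert_eq, Set.image_singleton,
    Lfull_inl1 ξ hξ8]
  rw [show Lfull ξ hξ8 (inr (a 1)) = L2 (a 1) from SemidirectProduct.lift_inr _ _ _ _,
    show Lfull ξ hξ8 (inr (xa 0)) = L2 (xa 0) from SemidirectProduct.lift_inr _ _ _ _,
    L2_a1, L2_xa0]
  rfl

lemma Lfull_inj (hξ : IsPrimitiveRoot (ξ:ℂ) 8) (hξ8 : ξ^8 = 1) :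
    Function.Injective (Lfull ξ hξ8) := by
  rw [← MonoidHom.ker_eq_bot_iff, eq_bot_iff]
  intro g hg
  have hg' : f1 ξ hξ8 g.left * L2 g.right = 1 := hg
  set v := (Multiplicative.toAdd g.left).val with hv
  have hf1 : f1 ξ hξ8 g.left = mkPGL (τdiag ξ ^ v) := by rw [map_pow]; rfl
  have hL2 : L2 g.right = mkPGL (monomial 1 (qf g.right)⁻¹) := rfl
  rw [hf1, hL2, ← map_mul] at hg'
  have hmul : τdiag ξ ^ v * monomial 1 (qf g.right)⁻¹
      = monomial (fun i => ξ^((i:ℕ)*v)) (qf g.right)⁻¹ := by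
    rw [τdiag_pow, monomial_mul, mul_one]
    congr 1
    funext i
    simp
  rw [hmul] at hg'
  have hc := (QuotientGroup.eq_one_iff _).mp hg'
  obtain ⟨hperm, hconst⟩ := center_monomial hc
  have hq : g.right = 1 := qf_one_of _ (by rw [← inv_inv (qf g.right), hperm, inv_one])
  have h1 := hconst 1
  have hξv : ξ ^ v = 1 := by
    have e1 : (((1 : Fin 8) : ℕ)) = 1 := rfl
    have e0 : (((0 : Fin 8) : ℕ)) = 0 := rfl
    rw [e1, e0, one_mul, zero_mul, pow_zero] at h1
    exact h1
  have hdvd : (8 : ℕ) ∣ v := by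
    refine (hξ.pow_eq_one_iff_dvd v).mp ?_
    have := congrArg (Units.val) hξv
    simpa using this
  have hv0 : v = 0 := Nat.eq_zero_of_dvd_of_lt hdvd (ZMod.val_lt _) |>.symm ▸ rfl
  have hleft : g.left = 1 := by
    have : Multiplicative.toAdd g.left = 0 := ZMod.val_eq_zero _ |>.mp hv0
    have := congrArg Multiplicative.ofAdd this
    simpa using this
  rw [Subgroup.mem_bot]
  ext
  · exact hleft
  · exact hq

end main

/-- Let `τ ∈ PGL(8, ℂ)` be induced by `diag(1, ξ, …, ξ⁷)` for a primitive 8-th root of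
unity `ξ`, and let `σ₂, σ₃ ∈ PGL(8, ℂ)` be the coordinate permutations `(1357)(2468)` and
`(1256)(4387)`. Then `⟨σ₂, σ₃⟩` is isomorphic to the quaternion group `Q₈`, and
`⟨τ, σ₂, σ₃⟩` is a nonabelian group of order 64, isomorphic to a semidirect product of the
normal subgroup `ℤ/8` generated by `τ` with the quaternion group `Q₈`. -/
theorem subgroup_generated_by_tau_sigma2_sigma3
    (ξ : ℂˣ) (hξ : IsPrimitiveRoot (ξ : ℂ) 8) :
    let τ : PGL8 := QuotientGroup.mk (monomial (fun i => ξ ^ (i : ℕ)) 1)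
    let σ₂ : PGL8 := QuotientGroup.mk (monomial 1 perm2)
    let σ₃ : PGL8 := QuotientGroup.mk (monomial 1 perm3)
    let H := Subgroup.closure {τ, σ₂, σ₃}
    Nonempty (Subgroup.closure {σ₂, σ₃} ≃* QuaternionGroup 2) ∧
    Nat.card H = 64 ∧
    (¬ ∀ a b : H, a * b = b * a) ∧
    ∃ (φ : QuaternionGroup 2 →* MulAut (Multiplicative (ZMod 8)))
      (e : H ≃* Multiplicative (ZMod 8) ⋊[φ] QuaternionGroup 2),
      Subgroup.map e.toMonoidHom ((Subgroup.closure {τ}).subgroupOf H) =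
        SemidirectProduct.inl.range := by
  intro τ σ₂ σ₃ H
  have hξ8 : ξ ^ 8 = 1 := by
    apply Units.ext
    have := hξ.pow_eq_one
    simpa using this
  have hinj := Lfull_inj ξ hξ hξ8
  have hrange : (Lfull ξ hξ8).range = H := Lfull_range ξ hξ8
  let E : (Multiplicative (ZMod 8) ⋊[φ8] QuaternionGroup 2) ≃* H :=
    (MonoidHom.ofInjective hinj).trans (MulEquiv.subgroupCongr hrange)
  have hEcoe : ∀ g, ((E g : H) : PGL8) = Lfull ξ hξ8 g := fun g =>
    MonoidHom.ofInjective_apply hinj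
  refine ⟨?_, ?_, ?_, ?_⟩
  · exact ⟨(MulEquiv.subgroupCongr (L2_range.symm :
        Subgroup.closure {σ₂, σ₃} = L2.range)).trans (MonoidHom.ofInjective L2_injective).symm⟩
  · have h1 : Nat.card H = Nat.card (Multiplicative (ZMod 8) ⋊[φ8] QuaternionGroup 2) :=
      Nat.card_congr E.toEquiv.symm
    have h2 : Nat.card (Multiplicative (ZMod 8) ⋊[φ8] QuaternionGroup 2)
        = Nat.card (Multiplicative (ZMod 8) × QuaternionGroup 2) :=
      Nat.card_congr ⟨fun g => (g.left, g.right), fun p => ⟨p.1, p.2⟩,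
        fun g => rfl, fun p => rfl⟩
    rw [h1, h2, Nat.card_prod, Nat.card_eq_fintype_card, Nat.card_eq_fintype_card,
      QuaternionGroup.card]
    rfl
  · intro hcomm
    have h := hcomm (E (SemidirectProduct.inr (QuaternionGroup.a 1)))
      (E (SemidirectProduct.inr (QuaternionGroup.xa 0)))
    have h2 : (SemidirectProduct.inr (QuaternionGroup.a 1) *
        SemidirectProduct.inr (QuaternionGroup.xa 0) :
          Multiplicative (ZMod 8) ⋊[φ8] QuaternionGroup 2)
        = SemidirectProduct.inr (QuaternionGroup.xa 0) *
          SemidirectProduct.inr (QuaternionGroup.a 1) :=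
      E.injective (by rw [map_mul, map_mul]; exact h)
    have h3 := congrArg SemidirectProduct.right h2
    exact absurd h3 (by decide)
  · refine ⟨φ8, E.symm, ?_⟩
    rw [Subgroup.map_equiv_eq_comap_symm', MulEquiv.symm_symm]
    ext g
    rw [Subgroup.mem_comap]
    rw [Subgroup.mem_subgroupOf]
    have hτ : Lfull ξ hξ8 (SemidirectProduct.inl (Multiplicative.ofAdd (1 : ZMod 8))) = τ :=
      Lfull_inl1 ξ hξ8
    constructor
    · intro hg
      rw [show ((E.toMonoidHom g : H) : PGL8) = Lfull ξ hξ8 g from hEcoe g,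
        ← Subgroup.zpowers_eq_closure] at hg
      obtain ⟨k, hk⟩ := hg
      have hk' : Lfull ξ hξ8 (SemidirectProduct.inl (Multiplicative.ofAdd 1)) ^ k
          = Lfull ξ hξ8 g := by rw [hτ]; exact hk
      rw [← map_zpow, ← map_zpow] at hk'
      exact ⟨_, hinj hk'⟩
    · rintro ⟨x, rfl⟩
      rw [show ((E.toMonoidHom (SemidirectProduct.inl x) : H) : PGL8)
          = Lfull ξ hξ8 (SemidirectProduct.inl x) from hEcoe _,
        ← Subgroup.zpowers_eq_closure]
      have : Lfull ξ hξ8 (SemidirectProduct.inl x)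
          = (mkPGL (τdiag ξ))^((Multiplicative.toAdd x).val) := by
        rw [show Lfull ξ hξ8 (SemidirectProduct.inl x) = f1 ξ hξ8 x
        from SemidirectProduct.lift_inl _ _ _ _]; rfl
      rw [this]
      have hT : mkPGL (τdiag ξ) = τ := rfl
      rw [hT]
      exact pow_mem (Subgroup.mem_zpowers τ) _
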